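/- Let X = (X_1, …, X_m) be an associated random vector and let x_1, …, x_m be real numbers. Then P(X_j ≤ x_j for all 1 ≤ j ≤ m) − ∏_{j=1}^m P(X_j ≤ x_j) ≤ Σ_{1 ≤ j < k ≤ m} ( P(X_j ≤ x_j, X_k ≤ x_k) − P(X_j ≤ x_j) P(X_k ≤ x_k) ). -/

import Mathlib

open MeasureTheory

/-- A random vector `X = (X_1, …, X_m)` is associated if `Cov[h₁(X), h₂(X)] ≥ 0` for every
pair of functions `h₁, h₂ : ℝ^m → ℝ` that are nondecreasing in every coordinate and such that
`h₁(X), h₂(X) ∈ L²`. -/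
def IsAssociated {Ω : Type*} [MeasurableSpace Ω] (μ : Measure Ω) {m : ℕ}
    (X : Fin m → Ω → ℝ) : Prop :=
  ∀ h₁ h₂ : (Fin m → ℝ) → ℝ,
    (∀ x y : Fin m → ℝ, (∀ i, x i ≤ y i) → h₁ x ≤ h₁ y) →
    (∀ x y : Fin m → ℝ, (∀ i, x i ≤ y i) → h₂ x ≤ h₂ y) →
    MemLp (fun ω => h₁ fun i => X i ω) 2 μ →
    MemLp (fun ω => h₂ fun i => X i ω) 2 μ →
    0 ≤ ∫ ω, ((h₁ fun i => X i ω) - ∫ ω', (h₁ fun i => X i ω') ∂μ) *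
        ((h₂ fun i => X i ω) - ∫ ω', (h₂ fun i => X i ω') ∂μ) ∂μ

/-- For an associated random vector `X = (X_1, …, X_m)` and reals `x_1, …, x_m`,
`P(∀ j, X_j ≤ x_j) - ∏_j P(X_j ≤ x_j)
  ≤ ∑_{j < k} (P(X_j ≤ x_j, X_k ≤ x_k) - P(X_j ≤ x_j) P(X_k ≤ x_k))`. -/
theorem associated_joint_cdf_bound
    {Ω : Type*} [MeasurableSpace Ω] (μ : Measure Ω) [IsProbabilityMeasure μ]
    {m : ℕ} (X : Fin m → Ω → ℝ) (hXmeas : ∀ i, Measurable (X i))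
    (hX : IsAssociated μ X) (x : Fin m → ℝ) :
    (μ {ω | ∀ j, X j ω ≤ x j}).toReal - ∏ j, (μ {ω | X j ω ≤ x j}).toReal ≤
      ∑ j : Fin m, ∑ k ∈ Finset.univ.filter (fun k => j < k),
        ((μ {ω | X j ω ≤ x j ∧ X k ω ≤ x k}).toReal -
          (μ {ω | X j ω ≤ x j}).toReal * (μ {ω | X k ω ≤ x k}).toReal) := by
  classical
  set F : Finset (Fin m) → (Fin m → ℝ) → ℝ :=
    fun S y => if ∀ j ∈ S, y j ≤ x j then 1 else 0 with hF
  set G : Finset (Fin m) → Ω → ℝ := fun S ω => F S fun i => X i ω with hG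
  -- basic facts about F
  have hF01 : ∀ S y, 0 ≤ F S y ∧ F S y ≤ 1 := by
    intro S y; simp only [hF]; split <;> norm_num
  have hFanti : ∀ (S : Finset (Fin m)) (y z : Fin m → ℝ), (∀ i, y i ≤ z i) → F S z ≤ F S y := by
    intro S y z hyz
    simp only [hF]
    by_cases h : ∀ j ∈ S, z j ≤ x j
    · rw [if_pos h, if_pos fun j hj => le_trans (hyz j) (h j hj)]
    · rw [if_neg h]
      split <;> norm_num
  have hFmul : ∀ (S T : Finset (Fin m)) (y : Fin m → ℝ), F S y * F T y = F (S ∪ T) y := by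
    intro S T y
    simp only [hF]
    by_cases hS : ∀ j ∈ S, y j ≤ x j <;> by_cases hT : ∀ j ∈ T, y j ≤ x j
    · have hST : ∀ j ∈ S ∪ T, y j ≤ x j := by
        intro j hj
        rcases Finset.mem_union.1 hj with h | h
        · exact hS j h
        · exact hT j h
      rw [if_pos hS, if_pos hT, if_pos hST]
      norm_num
    · rw [if_pos hS, if_neg hT, if_neg (by intro h; exact hT fun j hj => h j (Finset.mem_union_right _ hj))]
      norm_num
    · rw [if_neg hS, if_pos hT, if_neg (by intro h; exact hS fun j hj => h j (Finset.mem_union_left _ hj))]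
      norm_num
    · rw [if_neg hS, if_neg hT, if_neg (by intro h; exact hS fun j hj => h j (Finset.mem_union_left _ hj))]
      norm_num
  -- basic facts about G
  have hG01 : ∀ S ω, 0 ≤ G S ω ∧ G S ω ≤ 1 := fun S ω => hF01 S _
  have hGabs : ∀ S ω, |G S ω| ≤ 1 := fun S ω =>
    abs_le.2 ⟨by linarith [(hG01 S ω).1], (hG01 S ω).2⟩
  have hAmeas : ∀ S : Finset (Fin m), MeasurableSet {ω | ∀ j ∈ S, X j ω ≤ x j} := by
    intro S
    have h1 : {ω | ∀ j ∈ S, X j ω ≤ x j} = ⋂ j ∈ (S : Set (Fin m)), {ω | X j ω ≤ x j} := by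
      ext ω; simp
    rw [h1]
    exact MeasurableSet.biInter S.countable_toSet
      fun j _ => measurableSet_le (hXmeas j) measurable_const
  have hGmeas : ∀ S, Measurable (G S) := by
    intro S
    have h1 : G S = fun ω => if ω ∈ {ω | ∀ j ∈ S, X j ω ≤ x j} then (1 : ℝ) else 0 := rfl
    rw [h1]
    exact Measurable.ite (hAmeas S) measurable_const measurable_const
  -- integrability helpers
  have hmem : ∀ f : Ω → ℝ, Measurable f → (∀ ω, |f ω| ≤ 1) → MemLp f 2 μ := fun f hf hb =>
    MemLp.of_bound hf.aestronglyMeasurable 1 (ae_of_all μ (by simpa [Real.norm_eq_abs] using hb))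
  have hint : ∀ f : Ω → ℝ, Measurable f → (∀ ω, |f ω| ≤ 1) → Integrable f μ := fun f hf hb =>
    (hmem f hf hb).integrable one_le_two
  have hIntG : ∀ S, Integrable (G S) μ := fun S => hint _ (hGmeas S) (hGabs S)
  have hIntGG : ∀ S T, Integrable (fun ω => G S ω * G T ω) μ := fun S T =>
    hint _ ((hGmeas S).mul (hGmeas T))
      (fun ω => by
        rw [abs_mul]
        calc |G S ω| * |G T ω| ≤ 1 * 1 :=
              mul_le_mul (hGabs S ω) (hGabs T ω) (abs_nonneg _) zero_le_one
          _ = 1 := by norm_num)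
  -- value and bounds of the integral of G
  have hEG : ∀ S, ∫ ω, G S ω ∂μ = (μ {ω | ∀ j ∈ S, X j ω ≤ x j}).toReal := by
    intro S
    have h1 : G S = Set.indicator {ω | ∀ j ∈ S, X j ω ≤ x j} fun _ => (1 : ℝ) := by
      funext ω; rw [Set.indicator_apply]; rfl
    rw [h1, integral_indicator_const (1 : ℝ) (hAmeas S), smul_eq_mul, mul_one, measureReal_def]
  have hEG0 : ∀ S, 0 ≤ ∫ ω, G S ω ∂μ := fun S =>
    integral_nonneg fun ω => (hG01 S ω).1
  have hEG1 : ∀ S, ∫ ω, G S ω ∂μ ≤ 1 := by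
    intro S
    calc ∫ ω, G S ω ∂μ ≤ ∫ _ω, (1 : ℝ) ∂μ :=
          integral_mono (hIntG S) (integrable_const _) fun ω => (hG01 S ω).2
      _ = 1 := by simp
  -- covariance expansion
  have hcov : ∀ f w : Ω → ℝ, Integrable f μ → Integrable w μ →
      Integrable (fun ω => f ω * w ω) μ →
      ∫ ω, (f ω - ∫ ω', f ω' ∂μ) * (w ω - ∫ ω', w ω' ∂μ) ∂μ
        = (∫ ω, f ω * w ω ∂μ) - (∫ ω, f ω ∂μ) * (∫ ω, w ω ∂μ) := by
    intro f w hf hw hfw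
    set a := ∫ ω, f ω ∂μ with ha
    set b := ∫ ω, w ω ∂μ with hb
    have h1 : (fun ω => (f ω - a) * (w ω - b))
        = fun ω => f ω * w ω - (b * f ω + (a * w ω - a * b)) := by funext ω; ring
    have I1 : Integrable (fun ω => b * f ω) μ := hf.const_mul b
    have I2 : Integrable (fun ω => a * w ω) μ := hw.const_mul a
    have I3 : Integrable (fun ω => a * w ω - a * b) μ := I2.sub (integrable_const (a * b))
    have I4 : Integrable (fun ω => b * f ω + (a * w ω - a * b)) μ := I1.add I3
    rw [h1, integral_sub hfw I4, integral_add I1 I3,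
      integral_sub I2 (integrable_const (a * b)),
      integral_const_mul, integral_const_mul, integral_const, probReal_univ]
    simp only [ENNReal.toReal_one, one_smul, ← ha, ← hb]
    ring
  -- the key consequence of association : a nondecreasing and a nonincreasing function
  -- of X have nonpositive covariance
  have covle : ∀ f₁ f₂ : (Fin m → ℝ) → ℝ,
      (∀ y z : Fin m → ℝ, (∀ i, y i ≤ z i) → f₁ y ≤ f₁ z) →
      (∀ y z : Fin m → ℝ, (∀ i, y i ≤ z i) → f₂ z ≤ f₂ y) →
      (∀ y, |f₁ y| ≤ 1) → (∀ y, |f₂ y| ≤ 1) →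
      Measurable (fun ω => f₁ fun i => X i ω) → Measurable (fun ω => f₂ fun i => X i ω) →
      (∫ ω, (f₁ fun i => X i ω) * (f₂ fun i => X i ω) ∂μ)
        ≤ (∫ ω, (f₁ fun i => X i ω) ∂μ) * (∫ ω, (f₂ fun i => X i ω) ∂μ) := by
    intro f₁ f₂ hmono1 hmono2 hb1 hb2 hm1 hm2
    have h := hX f₁ (fun y => -f₂ y) hmono1
      (fun y z hyz => neg_le_neg (hmono2 y z hyz))
      (hmem _ hm1 fun ω => hb1 _)
      (hmem _ hm2.neg fun ω => by simp only [Pi.neg_apply, abs_neg]; exact hb2 _)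
    simp only [integral_neg] at h
    have h2 : (fun ω => ((f₁ fun i => X i ω) - ∫ ω', (f₁ fun i => X i ω') ∂μ) *
          (-(f₂ fun i => X i ω) - -∫ ω', (f₂ fun i => X i ω') ∂μ))
        = fun ω => -(((f₁ fun i => X i ω) - ∫ ω', (f₁ fun i => X i ω') ∂μ) *
          ((f₂ fun i => X i ω) - ∫ ω', (f₂ fun i => X i ω') ∂μ)) := by
      funext ω; ring
    rw [h2, integral_neg] at h
    have h3 : ∫ ω, ((f₁ fun i => X i ω) - ∫ ω', (f₁ fun i => X i ω') ∂μ) *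
        ((f₂ fun i => X i ω) - ∫ ω', (f₂ fun i => X i ω') ∂μ) ∂μ ≤ 0 := by linarith
    rw [hcov _ _ (hint _ hm1 fun ω => hb1 _) (hint _ hm2 fun ω => hb2 _)
      (hint _ (hm1.mul hm2) fun ω => by
        rw [abs_mul]
        calc |f₁ fun i => X i ω| * |f₂ fun i => X i ω| ≤ 1 * 1 :=
            mul_le_mul (hb1 _) (hb2 _) (abs_nonneg _) zero_le_one
          _ = 1 := by norm_num)] at h3
    linarith
  -- covariance of two G's is nonnegative
  have hcovG : ∀ S T : Finset (Fin m),
      (∫ ω, G S ω ∂μ) * (∫ ω, G T ω ∂μ) ≤ ∫ ω, G S ω * G T ω ∂μ := by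
    intro S T
    have h := covle (fun y => -F S y) (F T)
      (fun y z hyz => neg_le_neg (hFanti S y z hyz))
      (fun y z hyz => hFanti T y z hyz)
      (fun y => by rw [abs_neg]; exact abs_le.2 ⟨by linarith [(hF01 S y).1], (hF01 S y).2⟩)
      (fun y => abs_le.2 ⟨by linarith [(hF01 T y).1], (hF01 T y).2⟩)
      (hGmeas S).neg (hGmeas T)
    simp only [neg_mul, integral_neg, neg_mul, neg_le_neg_iff] at h
    exact h
  -- covariance of (1 - G S)(1 - G {a}) with G {k} is nonpositive
  have hcovB : ∀ (S : Finset (Fin m)) (a k : Fin m),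
      ∫ ω, ((1 - G S ω) * (1 - G {a} ω)) * G {k} ω ∂μ
        ≤ (∫ ω, (1 - G S ω) * (1 - G {a} ω) ∂μ) * ∫ ω, G {k} ω ∂μ := by
    intro S a k
    have h := covle (fun y => (1 - F S y) * (1 - F {a} y)) (F {k})
      (fun y z hyz => by
        show (1 - F S y) * (1 - F {a} y) ≤ (1 - F S z) * (1 - F {a} z)
        have h1 := hFanti S y z hyz
        have h2 := hFanti {a} y z hyz
        have h3 := (hF01 S z).2
        have h4 := (hF01 {a} y).2
        have h5 := (hF01 {a} z).2
        nlinarith)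
      (fun y z hyz => hFanti {k} y z hyz)
      (fun y => by
        show |(1 - F S y) * (1 - F {a} y)| ≤ 1
        have h1 := (hF01 S y).1; have h2 := (hF01 S y).2
        have h3 := (hF01 {a} y).1; have h4 := (hF01 {a} y).2
        rw [abs_le]; constructor <;> nlinarith)
      (fun y => abs_le.2 ⟨by linarith [(hF01 {k} y).1], (hF01 {k} y).2⟩)
      (((measurable_const.sub (hGmeas S))).mul (measurable_const.sub (hGmeas {a})))
      (hGmeas {k})
    exact h
  -- abbreviation for the pairwise covariance
  set c : Fin m → Fin m → ℝ := fun j k =>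
    (∫ ω, G {j} ω * G {k} ω ∂μ) - (∫ ω, G {j} ω ∂μ) * ∫ ω, G {k} ω ∂μ with hc
  have hcsymm : ∀ j k, c j k = c k j := by
    intro j k
    simp only [hc]
    have h1 : (fun ω => G {j} ω * G {k} ω) = fun ω => G {k} ω * G {j} ω := by
      funext ω; ring
    rw [h1, mul_comm (∫ ω, G {j} ω ∂μ)]
  -- multiplicativity of G
  have hGmul : ∀ (a : Fin m) (S : Finset (Fin m)) (ω : Ω),
      G (insert a S) ω = G {a} ω * G S ω := by
    intro a S ω
    simp only [hG]
    rw [hFmul, ← Finset.insert_eq]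
  -- key lemma B : Cov(G S, G {k}) ≤ ∑_{j ∈ S} c j k
  have keyB : ∀ (k : Fin m) (S : Finset (Fin m)),
      (∫ ω, G S ω * G {k} ω ∂μ) - (∫ ω, G S ω ∂μ) * (∫ ω, G {k} ω ∂μ)
        ≤ ∑ j ∈ S, c j k := by
    intro k S
    induction S using Finset.induction_on with
    | empty =>
      have hGe : ∀ ω, G ∅ ω = 1 := by intro ω; simp [hG, hF]
      have h1 : (fun ω => G ∅ ω * G {k} ω) = fun ω => G {k} ω := by
        funext ω; rw [hGe]; ring
      have h2 : (fun ω => G (∅ : Finset (Fin m)) ω) = fun _ => (1 : ℝ) := by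
        funext ω; exact hGe ω
      rw [Finset.sum_empty, h1]
      have h3 : ∫ ω, G (∅ : Finset (Fin m)) ω ∂μ = 1 := by
        rw [h2]; simp
      rw [h3, one_mul]
      linarith
    | @insert a S ha ih =>
      -- notation
      have e1 : ∀ ω, G (insert a S) ω * G {k} ω
          = G S ω * G {k} ω + G {a} ω * G {k} ω - G {k} ω
            + ((1 - G S ω) * (1 - G {a} ω)) * G {k} ω := by
        intro ω; rw [hGmul]; ring
      have e2 : ∀ ω, G (insert a S) ω
          = G S ω + G {a} ω - 1 + (1 - G S ω) * (1 - G {a} ω) := by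
        intro ω; rw [hGmul]; ring
      have hIntFc : Integrable (fun ω => (1 - G S ω) * (1 - G {a} ω)) μ := by
        refine hint _ ((measurable_const.sub (hGmeas S)).mul
          (measurable_const.sub (hGmeas {a}))) fun ω => ?_
        have h1 := (hG01 S ω).1; have h2 := (hG01 S ω).2
        have h3 := (hG01 {a} ω).1; have h4 := (hG01 {a} ω).2
        rw [abs_le]; constructor <;> nlinarith
      have hIntFcw : Integrable (fun ω => ((1 - G S ω) * (1 - G {a} ω)) * G {k} ω) μ := by
        refine hint _ (((measurable_const.sub (hGmeas S)).mul
          (measurable_const.sub (hGmeas {a}))).mul (hGmeas {k})) fun ω => ?_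
        have h1 := (hG01 S ω).1; have h2 := (hG01 S ω).2
        have h3 := (hG01 {a} ω).1; have h4 := (hG01 {a} ω).2
        have h5 := (hG01 {k} ω).1; have h6 := (hG01 {k} ω).2
        have p1 : 0 ≤ (1 - G S ω) * (1 - G {a} ω) := mul_nonneg (by linarith) (by linarith)
        have p2 : (1 - G S ω) * (1 - G {a} ω) ≤ 1 := by nlinarith
        have q1 : 0 ≤ (1 - G S ω) * (1 - G {a} ω) * G {k} ω := mul_nonneg p1 h5
        have q2 : (1 - G S ω) * (1 - G {a} ω) * G {k} ω ≤ 1 := by nlinarith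
        rw [abs_le]; constructor <;> linarith
      have i1 : ∫ ω, G (insert a S) ω * G {k} ω ∂μ
          = (∫ ω, G S ω * G {k} ω ∂μ) + (∫ ω, G {a} ω * G {k} ω ∂μ)
            - (∫ ω, G {k} ω ∂μ) + ∫ ω, ((1 - G S ω) * (1 - G {a} ω)) * G {k} ω ∂μ := by
        have h1 : (fun ω => G (insert a S) ω * G {k} ω)
            = fun ω => G S ω * G {k} ω + G {a} ω * G {k} ω - G {k} ω
              + ((1 - G S ω) * (1 - G {a} ω)) * G {k} ω := funext e1
        have I1 : Integrable (fun ω => G S ω * G {k} ω + G {a} ω * G {k} ω) μ :=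
          (hIntGG S {k}).add (hIntGG {a} {k})
        have I2 : Integrable (fun ω => G S ω * G {k} ω + G {a} ω * G {k} ω - G {k} ω) μ :=
          I1.sub (hIntG {k})
        rw [h1, integral_add I2 hIntFcw, integral_sub I1 (hIntG {k}),
          integral_add (hIntGG S {k}) (hIntGG {a} {k})]
      have i2 : ∫ ω, G (insert a S) ω ∂μ
          = (∫ ω, G S ω ∂μ) + (∫ ω, G {a} ω ∂μ) - 1
            + ∫ ω, (1 - G S ω) * (1 - G {a} ω) ∂μ := by
        have h1 : (fun ω => G (insert a S) ω)
            = fun ω => G S ω + G {a} ω - 1 + (1 - G S ω) * (1 - G {a} ω) := funext e2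
        have I1 : Integrable (fun ω => G S ω + G {a} ω) μ := (hIntG S).add (hIntG {a})
        have I2 : Integrable (fun ω => G S ω + G {a} ω - 1) μ := I1.sub (integrable_const 1)
        rw [h1, integral_add I2 hIntFc, integral_sub I1 (integrable_const (1 : ℝ)),
          integral_add (hIntG S) (hIntG {a}), integral_const, probReal_univ]
        simp
      have hB := hcovB S a k
      have expand : (∫ ω, G (insert a S) ω * G {k} ω ∂μ)
            - (∫ ω, G (insert a S) ω ∂μ) * (∫ ω, G {k} ω ∂μ)
          = ((∫ ω, G S ω * G {k} ω ∂μ) - (∫ ω, G S ω ∂μ) * (∫ ω, G {k} ω ∂μ))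
            + ((∫ ω, G {a} ω * G {k} ω ∂μ) - (∫ ω, G {a} ω ∂μ) * (∫ ω, G {k} ω ∂μ))
            + ((∫ ω, ((1 - G S ω) * (1 - G {a} ω)) * G {k} ω ∂μ)
              - (∫ ω, (1 - G S ω) * (1 - G {a} ω) ∂μ) * (∫ ω, G {k} ω ∂μ)) := by
        rw [i1, i2]; ring
      rw [expand, Finset.sum_insert ha]
      have hcak : (∫ ω, G {a} ω * G {k} ω ∂μ) - (∫ ω, G {a} ω ∂μ) * (∫ ω, G {k} ω ∂μ)
          = c a k := rfl
      linarith [ih]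
  -- key lemma A
  have keyA : ∀ S : Finset (Fin m),
      (∏ j ∈ S, ∫ ω, G {j} ω ∂μ) ≤ (∫ ω, G S ω ∂μ) ∧
      (∫ ω, G S ω ∂μ) - (∏ j ∈ S, ∫ ω, G {j} ω ∂μ)
        ≤ ∑ j ∈ S, ∑ k ∈ S, (if j < k then c j k else 0) := by
    intro S
    induction S using Finset.induction_on with
    | empty =>
      have h2 : (fun ω => G (∅ : Finset (Fin m)) ω) = fun _ => (1 : ℝ) := by
        funext ω; simp [hG, hF]
      have h3 : ∫ ω, G (∅ : Finset (Fin m)) ω ∂μ = 1 := by rw [h2]; simp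
      rw [h3]
      simp
    | @insert a S ha ih =>
      have hins : (fun ω => G (insert a S) ω) = fun ω => G {a} ω * G S ω :=
        funext (hGmul a S)
      have iins : ∫ ω, G (insert a S) ω ∂μ = ∫ ω, G {a} ω * G S ω ∂μ := by rw [hins]
      have hprod : ∏ j ∈ insert a S, ∫ ω, G {j} ω ∂μ
          = (∫ ω, G {a} ω ∂μ) * ∏ j ∈ S, ∫ ω, G {j} ω ∂μ := Finset.prod_insert ha
      -- part 1 : lower bound
      have hprodS0 : 0 ≤ ∏ j ∈ S, ∫ ω, G {j} ω ∂μ :=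
        Finset.prod_nonneg fun j _ => hEG0 {j}
      have part1 : ∏ j ∈ insert a S, ∫ ω, G {j} ω ∂μ ≤ ∫ ω, G (insert a S) ω ∂μ := by
        rw [hprod, iins]
        calc (∫ ω, G {a} ω ∂μ) * ∏ j ∈ S, ∫ ω, G {j} ω ∂μ
            ≤ (∫ ω, G {a} ω ∂μ) * ∫ ω, G S ω ∂μ :=
              mul_le_mul_of_nonneg_left ih.1 (hEG0 {a})
          _ ≤ ∫ ω, G {a} ω * G S ω ∂μ := hcovG {a} S
      refine ⟨part1, ?_⟩
      -- part 2
      have hswap : ∫ ω, G {a} ω * G S ω ∂μ = ∫ ω, G S ω * G {a} ω ∂μ := by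
        have h1 : (fun ω => G {a} ω * G S ω) = fun ω => G S ω * G {a} ω := by
          funext ω; ring
        rw [h1]
      have hkB := keyB a S
      have hmid : (∫ ω, G S ω ∂μ) * (∫ ω, G {a} ω ∂μ)
            - (∫ ω, G {a} ω ∂μ) * ∏ j ∈ S, ∫ ω, G {j} ω ∂μ
          ≤ (∫ ω, G S ω ∂μ) - ∏ j ∈ S, ∫ ω, G {j} ω ∂μ := by
        have h1 : (∫ ω, G S ω ∂μ) * (∫ ω, G {a} ω ∂μ)
              - (∫ ω, G {a} ω ∂μ) * ∏ j ∈ S, ∫ ω, G {j} ω ∂μ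
            = (∫ ω, G {a} ω ∂μ) * ((∫ ω, G S ω ∂μ) - ∏ j ∈ S, ∫ ω, G {j} ω ∂μ) := by ring
        rw [h1]
        have h2 : 0 ≤ (∫ ω, G S ω ∂μ) - ∏ j ∈ S, ∫ ω, G {j} ω ∂μ := by linarith [ih.1]
        nlinarith [hEG0 {a}, hEG1 {a}]
      -- combinatorial identity for the double sum
      have hsum : ∑ j ∈ insert a S, ∑ k ∈ insert a S, (if j < k then c j k else 0)
          = (∑ j ∈ S, c j a) + ∑ j ∈ S, ∑ k ∈ S, (if j < k then c j k else 0) := by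
        rw [Finset.sum_insert ha]
        have h1 : ∀ j ∈ S, (∑ k ∈ insert a S, if j < k then c j k else 0)
            = (if j < a then c j a else 0) + ∑ k ∈ S, (if j < k then c j k else 0) :=
          fun j _ => Finset.sum_insert ha
        rw [Finset.sum_congr rfl h1, Finset.sum_insert ha, Finset.sum_add_distrib]
        have h2 : (if a < a then c a a else 0) = 0 := by simp
        rw [h2]
        have h3 : (∑ k ∈ S, if a < k then c a k else 0) + ∑ j ∈ S, (if j < a then c j a else 0)
            = ∑ j ∈ S, c j a := by
          rw [← Finset.sum_add_distrib]
          refine Finset.sum_congr rfl fun j hj => ?_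
          have hne : j ≠ a := fun h => ha (h ▸ hj)
          rcases lt_or_gt_of_ne hne with h | h
          · rw [if_neg (not_lt_of_gt h), if_pos h, zero_add]
          · rw [if_pos h, if_neg (not_lt_of_gt h), add_zero, hcsymm]
        linarith [h3]
      rw [hsum, iins, hswap, hprod]
      have final : (∫ ω, G S ω * G {a} ω ∂μ)
            - (∫ ω, G {a} ω ∂μ) * ∏ j ∈ S, ∫ ω, G {j} ω ∂μ
          = ((∫ ω, G S ω * G {a} ω ∂μ) - (∫ ω, G S ω ∂μ) * (∫ ω, G {a} ω ∂μ))
            + ((∫ ω, G S ω ∂μ) * (∫ ω, G {a} ω ∂μ)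
              - (∫ ω, G {a} ω ∂μ) * ∏ j ∈ S, ∫ ω, G {j} ω ∂μ) := by ring
      rw [final]
      linarith [ih.2, hkB, hmid]
  -- assemble
  have main := (keyA Finset.univ).2
  -- translate the integrals into measures
  have tr1 : ∫ ω, G Finset.univ ω ∂μ = (μ {ω | ∀ j, X j ω ≤ x j}).toReal := by
    have hset : {ω | ∀ j ∈ Finset.univ, X j ω ≤ x j} = {ω | ∀ j, X j ω ≤ x j} := by
      ext ω; simp
    rw [hEG, hset]
  have tr2 : ∀ j, ∫ ω, G {j} ω ∂μ = (μ {ω | X j ω ≤ x j}).toReal := by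
    intro j
    have hset : {ω | ∀ i ∈ ({j} : Finset (Fin m)), X i ω ≤ x i} = {ω | X j ω ≤ x j} := by
      ext ω; simp
    rw [hEG, hset]
  have tr3 : ∀ j k, ∫ ω, G {j} ω * G {k} ω ∂μ
      = (μ {ω | X j ω ≤ x j ∧ X k ω ≤ x k}).toReal := by
    intro j k
    have h1 : (fun ω => G {j} ω * G {k} ω) = G ({j} ∪ {k}) := by
      funext ω; simp only [hG]; rw [hFmul]
    have hset : {ω | ∀ i ∈ ({j} ∪ {k} : Finset (Fin m)), X i ω ≤ x i}
        = {ω | X j ω ≤ x j ∧ X k ω ≤ x k} := by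
      ext ω; simp
    rw [h1, hEG, hset]
  rw [tr1] at main
  have tr4 : (∏ j ∈ Finset.univ, ∫ ω, G {j} ω ∂μ)
      = ∏ j, (μ {ω | X j ω ≤ x j}).toReal := Finset.prod_congr rfl fun j _ => tr2 j
  rw [tr4] at main
  refine main.trans (le_of_eq ?_)
  refine Finset.sum_congr rfl fun j _ => ?_
  rw [Finset.sum_filter]
  refine Finset.sum_congr rfl fun k _ => ?_
  split
  · simp only [hc]
    rw [tr3, tr2, tr2]
  · rfl
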